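/- Let Φ_E and Φ_H be completely positive trace-preserving maps with Φ_E = Φ_H + δΦ where Φ_H ∘ δΦ = δΦ ∘ Φ_H = 0, and suppose ‖δΦ(ρ)‖₁ ≤ ε‖ρ‖₁ for all Hermitian ρ. Then Φ_E ∘ Φ_E = Φ_H + δΦ ∘ δΦ, and ‖(δΦ ∘ δΦ)(ρ)‖₁ ≤ ε²‖ρ‖₁ for every density matrix ρ. In particular, if an ensemble's k-th moment channel has additive error ε (diamond-norm distance ε to the Haar moment channel), then its twofold composition has additive error at most ε². -/

import Mathlib

open scoped ComplexOrder

open scoped MatrixOrder in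
/-- The trace norm `‖A‖₁ = tr √(Aᴴ A)` of a complex matrix. -/
noncomputable def traceNorm {d : ℕ} (A : Matrix (Fin d) (Fin d) ℂ) : ℝ :=
  ((CFC.sqrt (A.conjTranspose * A)).trace).re

open scoped MatrixOrder in
lemma traceNorm_nonneg {d : ℕ} (A : Matrix (Fin d) (Fin d) ℂ) : 0 ≤ traceNorm A := by
  have h := Matrix.nonneg_iff_posSemidef.mp (CFC.sqrt_nonneg (A.conjTranspose * A))
  unfold traceNorm
  simpa using (Complex.le_def.mp h.trace_nonneg).1

open scoped MatrixOrder in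
lemma traceNorm_posSemidef {d : ℕ} {A : Matrix (Fin d) (Fin d) ℂ} (hA : A.PosSemidef) :
    traceNorm A = A.trace.re := by
  have hsq : A ^ 2 = A.conjTranspose * A := by rw [pow_two]; congr 1; exact hA.1.symm
  unfold traceNorm
  rw [hA.1.eq, CFC.sqrt_mul_self A hA.nonneg]

theorem stmt_3 {d : ℕ} (ε : ℝ)
    (ΦE ΦH δΦ : Matrix (Fin d) (Fin d) ℂ →ₗ[ℂ] Matrix (Fin d) (Fin d) ℂ)
    (hEpos : ∀ ρ : Matrix (Fin d) (Fin d) ℂ, ρ.PosSemidef → (ΦE ρ).PosSemidef)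
    (hHpos : ∀ ρ : Matrix (Fin d) (Fin d) ℂ, ρ.PosSemidef → (ΦH ρ).PosSemidef)
    (hEtr : ∀ ρ : Matrix (Fin d) (Fin d) ℂ, (ΦE ρ).trace = ρ.trace)
    (hHtr : ∀ ρ : Matrix (Fin d) (Fin d) ℂ, (ΦH ρ).trace = ρ.trace)
    (hE : ΦE = ΦH + δΦ)
    (hidem : ΦH ∘ₗ ΦH = ΦH)
    (h1 : ΦH ∘ₗ δΦ = 0) (h2 : δΦ ∘ₗ ΦH = 0)
    (hb : ∀ ρ : Matrix (Fin d) (Fin d) ℂ, ρ.IsHermitian → traceNorm (δΦ ρ) ≤ ε * traceNorm ρ) :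
    ΦE ∘ₗ ΦE = ΦH + δΦ ∘ₗ δΦ ∧
      ∀ ρ : Matrix (Fin d) (Fin d) ℂ, ρ.PosSemidef → ρ.trace = 1 →
        traceNorm ((δΦ ∘ₗ δΦ) ρ) ≤ ε ^ 2 * traceNorm ρ := by
  constructor
  · subst hE
    ext x
    have e1 := congrArg (· x) hidem
    have e2 := congrArg (· x) h1
    have e3 := congrArg (· x) h2
    simp only [LinearMap.comp_apply, LinearMap.zero_apply, LinearMap.add_apply] at *
    simp [map_add, e1, e2, e3]
  · intro ρ hρ htr
    -- δΦ ρ is Hermitian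
    have hδρ : (δΦ ρ).IsHermitian := by
      have : δΦ ρ = ΦE ρ - ΦH ρ := by rw [hE]; simp
      rw [this]
      exact (hEpos ρ hρ).1.sub (hHpos ρ hρ).1
    have hε : 0 ≤ ε := by
      have h0 := hb ρ hρ.1
      have hρn : traceNorm ρ = 1 := by
        rw [traceNorm_posSemidef hρ, htr]; simp
      nlinarith [traceNorm_nonneg (δΦ ρ)]
    have c1 := hb (δΦ ρ) hδρ
    have c2 := hb ρ hρ.1
    have : traceNorm ((δΦ ∘ₗ δΦ) ρ) = traceNorm (δΦ (δΦ ρ)) := rfl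
    rw [this]
    calc traceNorm (δΦ (δΦ ρ)) ≤ ε * traceNorm (δΦ ρ) := c1
      _ ≤ ε * (ε * traceNorm ρ) := by nlinarith
      _ = ε ^ 2 * traceNorm ρ := by ring
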